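/- arXiv:1401.7697 — 4 statements merged into one kernel-verified Lean document; each statement's English description precedes it below -/
import Mathlib

section
/- Let U ⊆ ℝ^N be open, let φ : ℝ^N → ℝ be twice continuously differentiable on U with ‖∇φ(x)‖ = 1 for every x ∈ U, and define p : U → ℝ^N by p(x) = x − φ(x)·∇φ(x). Let g : ℝ^N → ℝ be differentiable. Then for every x ∈ U the directional derivative of g ∘ p at x in the direction ∇φ(x) vanishes: D(g ∘ p)(x)[∇φ(x)] = 0. -/
open InnerProductSpace

lemma stmt11_aux {E : Type*} [NormedAddCommGroup E] [InnerProductSpace ℝ E]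
    [CompleteSpace E] {U : Set E} (hU : IsOpen U)
    {φ : E → ℝ} (hφ : ContDiffOn ℝ 2 φ U)
    (heik : ∀ x ∈ U, ‖gradient φ x‖ = 1)
    (p : E → E) (hp : ∀ x, p x = x - φ x • gradient φ x)
    {g : E → ℝ} (hg : Differentiable ℝ g) :
    ∀ x ∈ U, fderiv ℝ (g ∘ p) x (gradient φ x) = 0 := by
  intro x hx
  have hxU : U ∈ nhds x := hU.mem_nhds hx
  have hφx : ContDiffAt ℝ 2 φ x := hφ.contDiffAt hxU
  have hfd1 : ContDiffAt ℝ 1 (fderiv ℝ φ) x := hφx.fderiv_right (by norm_num)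
  have hfdd : DifferentiableAt ℝ (fderiv ℝ φ) x := hfd1.differentiableAt one_ne_zero
  set n : E := gradient φ x with hn
  set A : E →L[ℝ] E →L[ℝ] ℝ := fderiv ℝ (fderiv ℝ φ) x with hA
  set L : (E →L[ℝ] ℝ) →L[ℝ] E :=
    ((InnerProductSpace.toDual ℝ E).symm.toContinuousLinearEquiv :
      (E →L[ℝ] ℝ) ≃L[ℝ] E).toContinuousLinearMap with hL
  have hLapp : ∀ μ : E →L[ℝ] ℝ, L μ = (InnerProductSpace.toDual ℝ E).symm μ := fun μ => rfl
  have hgrad_eq : ∀ y, gradient φ y = L (fderiv ℝ φ y) := fun y => rfl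
  have hG : HasFDerivAt (gradient φ) (L.comp A) x := by
    have := L.hasFDerivAt.comp x hfdd.hasFDerivAt
    exact this
  set H : E →L[ℝ] E := L.comp A with hH
  have hinnerL : ∀ (μ : E →L[ℝ] ℝ) (v : E), (inner ℝ (L μ) v : ℝ) = μ v := by
    intro μ v
    rw [hLapp]; exact InnerProductSpace.toDual_symm_apply
  have hfd_inner : ∀ v : E, fderiv ℝ φ x v = (inner ℝ n v : ℝ) := by
    intro v
    rw [hn, hgrad_eq, hinnerL]
  have hsymm : ∀ v w : E, A v w = A w v := hφx.isSymmSndFDerivAt (by simp)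
  have hHvn : ∀ v : E, (inner ℝ (H v) n : ℝ) = 0 := by
    intro v
    set q : E → ℝ := fun y => inner ℝ (gradient φ y) (gradient φ y) with hq
    have hq1 : ∀ᶠ y in nhds x, q y = 1 := by
      filter_upwards [hxU] with y hy
      have : q y = ‖gradient φ y‖ ^ 2 := real_inner_self_eq_norm_sq _
      rw [this, heik y hy]; norm_num
    have hq0 : HasFDerivAt q (0 : E →L[ℝ] ℝ) x := by
      have h1 : HasFDerivAt (fun _ : E => (1 : ℝ)) (0 : E →L[ℝ] ℝ) x := hasFDerivAt_const 1 x
      exact h1.congr_of_eventuallyEq (hq1.mono fun y hy => hy)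
    have hqD : HasFDerivAt q
        ((fderivInnerCLM ℝ (gradient φ x, gradient φ x)).comp ((H).prod (H))) x :=
      hG.inner ℝ hG
    have heq := hqD.unique hq0
    have hv := congrArg (fun (T : E →L[ℝ] ℝ) => T v) heq
    simp only [ContinuousLinearMap.comp_apply, ContinuousLinearMap.prod_apply,
      fderivInnerCLM_apply, ContinuousLinearMap.zero_apply] at hv
    have h2 : (inner ℝ n (H v) : ℝ) + inner ℝ (H v) n = 0 := hv
    rw [real_inner_comm n (H v)] at h2
    linarith
  have hHn : H n = 0 := by
    have h0 : (inner ℝ (H n) (H n) : ℝ) = 0 := by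
      have e1 : (inner ℝ (H n) (H n) : ℝ) = A n (H n) := hinnerL _ _
      rw [e1, hsymm n (H n)]
      have e2 : A (H n) n = (inner ℝ (H (H n)) n : ℝ) := (hinnerL _ _).symm
      rw [e2]
      exact hHvn (H n)
    exact inner_self_eq_zero.mp h0
  have hφd : HasFDerivAt φ (fderiv ℝ φ x) x :=
    (hφx.differentiableAt two_ne_zero).hasFDerivAt
  have hpfun : p = fun y => y - φ y • gradient φ y := funext hp
  have hP : HasFDerivAt p
      (ContinuousLinearMap.id ℝ E -
        (φ x • H + (fderiv ℝ φ x).smulRight n)) x := by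
    rw [hpfun]
    exact (hasFDerivAt_id x).sub (hφd.smul hG)
  have hPn : (ContinuousLinearMap.id ℝ E -
        (φ x • H + (fderiv ℝ φ x).smulRight n)) n = 0 := by
    have h1 : fderiv ℝ φ x n = 1 := by
      rw [hfd_inner, real_inner_self_eq_norm_sq, heik x hx]; norm_num
    simp [ContinuousLinearMap.smulRight_apply, hHn, h1]
  have hgp : HasFDerivAt (g ∘ p)
      ((fderiv ℝ g (p x)).comp
        (ContinuousLinearMap.id ℝ E -
          (φ x • H + (fderiv ℝ φ x).smulRight n))) x :=
    (hg (p x)).hasFDerivAt.comp x hP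
  rw [hgp.fderiv, ContinuousLinearMap.comp_apply, hPn, map_zero]

/-- The normal extension is constant in the normal direction (equation (3.5)):
with `p(x) = x − φ(x)∇φ(x)` and `‖∇φ‖ = 1` on `U`, the directional derivative of
`g ∘ p` along `∇φ(x)` vanishes at every `x ∈ U`. -/
theorem stmt11 {N : ℕ} {U : Set (EuclideanSpace ℝ (Fin N))} (hU : IsOpen U)
    {φ : EuclideanSpace ℝ (Fin N) → ℝ} (hφ : ContDiffOn ℝ 2 φ U)
    (heik : ∀ x ∈ U, ‖gradient φ x‖ = 1)
    (p : EuclideanSpace ℝ (Fin N) → EuclideanSpace ℝ (Fin N))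
    (hp : ∀ x, p x = x - φ x • gradient φ x)
    {g : EuclideanSpace ℝ (Fin N) → ℝ} (hg : Differentiable ℝ g) :
    ∀ x ∈ U, fderiv ℝ (g ∘ p) x (gradient φ x) = 0 :=
  stmt11_aux hU hφ heik p hp hg
end

section
/- Let N ≥ 2, let n ∈ ℝ^N be a unit vector, and let D be a symmetric positive semidefinite real N×N matrix with D·n = 0 such that D + d·(n nᵀ) is positive definite for every d > 0. Define K(A) = (tr(A)/N)^N / det(A) for positive definite A. Then the choice d* = tr(D)/(N−1) minimizes d ↦ K(D + d·(n nᵀ)) over d > 0; that is, for every d > 0, K(D + d*·(n nᵀ)) ≤ K(D + d·(n nᵀ)). -/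
/-- The K-condition number `K(A) = (tr(A)/N)^N / det(A)` of an `N × N` matrix. -/
noncomputable def Kcond {N : ℕ} (A : Matrix (Fin N) (Fin N) ℝ) : ℝ :=
  (A.trace / (N : ℝ)) ^ N / A.det

/-- Bernoulli-based scalar inequality: `u ≤ (1 + (u-1)/N)^N` for `u > 0`. -/
lemma bern_aux (N : ℕ) (hN : 1 ≤ N) (u : ℝ) (hu : 0 < u) :
    u ≤ (1 + (u - 1) / (N : ℝ)) ^ N := by
  have hN0 : (0:ℝ) < N := by exact_mod_cast hN
  have h2 : (-2:ℝ) ≤ (u - 1) / N := by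
    rw [le_div_iff₀ hN0]
    have h1 : (1:ℝ) ≤ N := by exact_mod_cast hN
    nlinarith
  have h := one_add_mul_le_pow h2 N
  have hNne : (N:ℝ) ≠ 0 := ne_of_gt hN0
  calc u = 1 + (N:ℝ) * ((u - 1)/N) := by field_simp; ring
    _ ≤ _ := h

open Matrix in
/-- Section 3.2: the choice `d = tr(D)/(N−1)` minimizes the K-condition number of the
volume diffusion tensor `D + d·n nᵀ` over `d > 0`, for a symmetric positive
semidefinite tangential tensor `D` with `D n = 0`. -/
theorem stmt12 {N : ℕ} (hN : 2 ≤ N) (n : EuclideanSpace ℝ (Fin N)) (hn : ‖n‖ = 1)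
    {D : Matrix (Fin N) (Fin N) ℝ} (hD : D.PosSemidef) (hDn : D.mulVec n = 0)
    (hpos : ∀ d : ℝ, 0 < d → (D + d • Matrix.vecMulVec n n).PosDef) :
    ∀ d : ℝ, 0 < d →
      Kcond (D + (D.trace / ((N : ℝ) - 1)) • Matrix.vecMulVec n n) ≤
        Kcond (D + d • Matrix.vecMulVec n n) := by
  intro d hd
  set M := Matrix.vecMulVec n n with hM
  have hN2 : (2:ℝ) ≤ (N:ℝ) := by exact_mod_cast hN
  have hN0 : (0:ℝ) < N := by linarith
  have hNne : (N:ℝ) ≠ 0 := ne_of_gt hN0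
  have hN1 : (0:ℝ) < (N:ℝ) - 1 := by linarith
  -- the unit-vector condition as a sum
  have hnn : ∑ j, n j * n j = 1 := by
    have h : Real.sqrt (∑ i, ‖n i‖ ^ 2) = 1 := by rw [← EuclideanSpace.norm_eq, hn]
    rw [Real.sqrt_eq_one] at h
    simpa [Real.norm_eq_abs, sq_abs, pow_two] using h
  -- `M` fixes `n`
  have hMn : M *ᵥ n = n := by
    ext i
    simp only [hM, Matrix.mulVec, dotProduct, Matrix.vecMulVec_apply, mul_assoc,
      ← Finset.mul_sum]
    rw [hnn, mul_one]
  have htr : M.trace = 1 := by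
    simpa [Matrix.trace, Matrix.diag, hM, Matrix.vecMulVec_apply] using hnn
  -- the matrix `A = D + M` is positive definite and fixes `n`
  have hA : (D + M).PosDef := by simpa using hpos 1 one_pos
  have hAdet : 0 < (D + M).det := hA.det_pos
  have hAunit : IsUnit (D + M).det := hAdet.ne'.isUnit
  have hAn : (D + M) *ᵥ n = n := by
    rw [Matrix.add_mulVec, hDn, hMn, zero_add]
  have hAinvn : (D + M)⁻¹ *ᵥ n = n := by
    calc (D + M)⁻¹ *ᵥ n = (D + M)⁻¹ *ᵥ ((D + M) *ᵥ n) := by rw [hAn]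
      _ = ((D + M)⁻¹ * (D + M)) *ᵥ n := by rw [Matrix.mulVec_mulVec]
      _ = (1 : Matrix (Fin N) (Fin N) ℝ) *ᵥ n := by rw [Matrix.nonsing_inv_mul _ hAunit]
      _ = n := Matrix.one_mulVec n
  -- determinant formula
  have hdet : ∀ e : ℝ, (D + e • M).det = e * (D + M).det := by
    intro e
    have hsplit : D + e • M
        = (D + M) + Matrix.replicateCol (Fin 1) n * Matrix.replicateRow (Fin 1) (fun j => (e - 1) * n j) := by
      erw [← Matrix.vecMulVec_eq (Fin 1)]
      ext i j
      simp only [hM, Matrix.add_apply, Matrix.smul_apply, Matrix.vecMulVec_apply, smul_eq_mul]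
      ring
    have hfac : D + M + Matrix.replicateCol (Fin 1) n * Matrix.replicateRow (Fin 1) (fun j => (e - 1) * n j)
        = (D + M) * (1 + Matrix.replicateCol (Fin 1) n * Matrix.replicateRow (Fin 1) (fun j => (e - 1) * n j)) := by
      rw [Matrix.mul_add, Matrix.mul_one, ← Matrix.mul_assoc, ← Matrix.replicateCol_mulVec, hAn]
    rw [hsplit, hfac, Matrix.det_mul]
    erw [Matrix.det_one_add_replicateCol_mul_replicateRow]
    simp only [dotProduct, mul_assoc, ← Finset.mul_sum]
    rw [hnn]
    ring
  -- trace formula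
  have htrace : ∀ e : ℝ, (D + e • M).trace = D.trace + e := by
    intro e
    rw [Matrix.trace_add, Matrix.trace_smul, htr, smul_eq_mul, mul_one]
  -- trace of `D` is nonnegative
  have ht0 : 0 ≤ D.trace := by
    rw [Matrix.trace]
    refine Finset.sum_nonneg fun i _ => ?_
    have h := hD.dotProduct_mulVec_nonneg (Pi.single i 1)
    simpa [Matrix.mulVec_single, dotProduct_single, single_dotProduct] using h
  set t := D.trace with htdef
  by_cases htz : t = 0
  · -- degenerate case: trace D = 0
    have hL : Kcond (D + (t / ((N:ℝ) - 1)) • M) = 0 := by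
      rw [htz, zero_div, zero_smul, add_zero]
      unfold Kcond
      rw [← htdef, htz, zero_div, zero_pow (by omega : N ≠ 0), zero_div]
    rw [hL]
    have h1 : 0 < (D + d • M).det := (hpos d hd).det_pos
    unfold Kcond
    apply div_nonneg _ h1.le
    apply pow_nonneg
    rw [htrace d, htz]
    positivity
  · have ht : 0 < t := lt_of_le_of_ne ht0 (Ne.symm htz)
    set c := t / ((N:ℝ) - 1) with hcdef
    have hc : 0 < c := div_pos ht hN1
    have htc : t = ((N:ℝ) - 1) * c := by
      rw [hcdef]; field_simp
    -- compute both Kconds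
    unfold Kcond
    rw [htrace c, hdet c, htrace d, hdet d]
    have hnum : (t + c) / N = c := by
      rw [htc]; field_simp; ring
    rw [hnum]
    rw [div_le_div_iff₀ (mul_pos hc hAdet) (mul_pos hd hAdet)]
    -- key scalar inequality
    set u := d / c with hudef
    have hu : 0 < u := div_pos hd hc
    have hdu : d = u * c := by rw [hudef]; field_simp
    have hform : (t + d) / N = c * (1 + (u - 1) / (N:ℝ)) := by
      rw [htc, hdu]; field_simp; ring
    have hb := bern_aux N (by omega) u hu
    have key : c ^ N * d ≤ ((t + d) / N) ^ N * c := by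
      calc c ^ N * d = c ^ N * u * c := by rw [hdu]; ring
        _ ≤ c ^ N * (1 + (u - 1) / (N:ℝ)) ^ N * c := by
            have h1 : c ^ N * u ≤ c ^ N * (1 + (u - 1) / (N:ℝ)) ^ N :=
              mul_le_mul_of_nonneg_left hb (pow_nonneg hc.le N)
            exact mul_le_mul_of_nonneg_right h1 hc.le
        _ = ((t + d) / N) ^ N * c := by rw [hform, mul_pow]
    calc c ^ N * (d * (D + M).det) = (c ^ N * d) * (D + M).det := by ring
      _ ≤ (((t + d) / N) ^ N * c) * (D + M).det :=
          mul_le_mul_of_nonneg_right key hAdet.le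
      _ = ((t + d) / N) ^ N * (c * (D + M).det) := by ring
end

section
/- Let H be a symmetric real 3×3 matrix, let n ∈ ℝ³ be a unit vector with H·n = 0, let t ∈ ℝ satisfy |t| · ‖H‖₂ ≤ 1/2, and set μ = det(I − t·H). Then I − t·H is invertible and for every v ∈ ℝ³: (1/9)·‖v‖² ≤ ⟨μ·(I − t·H)⁻² v, v⟩ ≤ 9·‖v‖², where (I − t·H)⁻² = ((I − t·H)⁻¹)² and ⟨·,·⟩ is the Euclidean inner product. -/
open Matrix

/-- The spectral (ℓ²-operator) norm of a real matrix. -/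
noncomputable def spectralNorm2 {N : ℕ} (A : Matrix (Fin N) (Fin N) ℝ) : ℝ :=
  ‖Matrix.toEuclideanCLM (𝕜 := ℝ) A‖

-- auxiliary: norm bound for mulVec through Euclidean CLM
lemma mulVec_norm_le {M : Matrix (Fin 3) (Fin 3) ℝ} (x : Fin 3 → ℝ) :
    ‖(WithLp.equiv 2 (Fin 3 → ℝ)).symm (M *ᵥ x)‖ ≤
      spectralNorm2 M * ‖(WithLp.equiv 2 (Fin 3 → ℝ)).symm x‖ := by
  have h := (Matrix.toEuclideanCLM (𝕜 := ℝ) M).le_opNorm ((WithLp.equiv 2 (Fin 3 → ℝ)).symm x)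
  exact h

lemma dot_eq_normsq (x : Fin 3 → ℝ) :
    x ⬝ᵥ x = ‖(WithLp.equiv 2 (Fin 3 → ℝ)).symm x‖ ^ 2 := by
  rw [← real_inner_self_eq_norm_sq]
  simp only [PiLp.inner_apply, dotProduct, WithLp.equiv_symm_apply, PiLp.toLp_apply, RCLike.inner_apply, conj_trivial, mul_comm]

set_option maxHeartbeats 1000000 in
/-- Uniform two-sided bound on the coefficient matrix `μ(I − t·H)⁻²` of the extended
problem (3.3)–(3.4): under the spectrum bounds (2.9) one has
`(1/9)‖v‖² ≤ ⟨μ(I − t·H)⁻² v, v⟩ ≤ 9‖v‖²` for every `v ∈ ℝ³` (here `‖v‖² = v ⬝ᵥ v`). -/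
theorem stmt14 {H : Matrix (Fin 3) (Fin 3) ℝ} (hH : H.IsHermitian)
    (n : EuclideanSpace ℝ (Fin 3)) (hn : ‖n‖ = 1) (hHn : H.mulVec n = 0)
    {t : ℝ} (ht : |t| * spectralNorm2 H ≤ 1 / 2) (μ : ℝ)
    (hμ : μ = ((1 : Matrix (Fin 3) (Fin 3) ℝ) - t • H).det) :
    IsUnit ((1 : Matrix (Fin 3) (Fin 3) ℝ) - t • H) ∧
      ∀ v : Fin 3 → ℝ,
        1 / 9 * (v ⬝ᵥ v) ≤ (μ • (1 - t • H)⁻¹ ^ 2).mulVec v ⬝ᵥ v ∧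
          (μ • (1 - t • H)⁻¹ ^ 2).mulVec v ⬝ᵥ v ≤ 9 * (v ⬝ᵥ v) := by
  set E := (WithLp.equiv 2 (Fin 3 → ℝ)).symm with hE
  set B : Matrix (Fin 3) (Fin 3) ℝ := 1 - t • H with hB
  -- spectral norm of t•H
  have htH : spectralNorm2 (t • H) ≤ 1 / 2 := by
    unfold spectralNorm2
    set_option synthInstance.maxHeartbeats 1000000 in
    rw [_root_.map_smul]
    calc ‖t • Matrix.toEuclideanCLM (𝕜 := ℝ) H‖ = |t| * spectralNorm2 H := by
          simpa [spectralNorm2] using norm_smul t (Matrix.toEuclideanCLM (𝕜 := ℝ) H)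
      _ ≤ 1/2 := ht
  -- key smallness: ‖(t•H) *ᵥ x‖ ≤ (1/2) ‖x‖
  have hsmall : ∀ x : Fin 3 → ℝ, ‖E ((t • H) *ᵥ x)‖ ≤ 1 / 2 * ‖E x‖ := by
    intro x
    refine (mulVec_norm_le x).trans ?_
    have : (0:ℝ) ≤ ‖E x‖ := norm_nonneg _
    nlinarith [mulVec_norm_le (M := t • H) x, norm_nonneg (E ((t • H) *ᵥ x))]
  -- B is Hermitian
  have hHt : Hᵀ = H := by
    rw [← Matrix.conjTranspose_eq_transpose_of_trivial]; exact hH.eq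
  have hBh : B.IsHermitian := by
    show Bᴴ = B
    simp [hB, Matrix.conjTranspose_sub, Matrix.conjTranspose_smul, hH.eq, hHt]
  set ν : Fin 3 → ℝ := hBh.eigenvalues with hν
  set b : Fin 3 → EuclideanSpace ℝ (Fin 3) := fun j => hBh.eigenvectorBasis j with hb
  -- eigenvector equation
  have heig : ∀ j, B *ᵥ ⇑(b j) = ν j • ⇑(b j) := fun j => hBh.mulVec_eigenvectorBasis j
  have hbnorm : ∀ j, ‖b j‖ = 1 := fun j => hBh.eigenvectorBasis.orthonormal.1 j
  -- eigenvalue bounds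
  have hνbound : ∀ j, 1/2 ≤ ν j ∧ ν j ≤ 3/2 := by
    intro j
    have h1 : (t • H) *ᵥ ⇑(b j) = (1 - ν j) • ⇑(b j) := by
      have := heig j
      rw [hB, Matrix.sub_mulVec, Matrix.one_mulVec] at this
      have h2 : (t • H) *ᵥ ⇑(b j) = ⇑(b j) - ν j • ⇑(b j) := by
        rw [← this]; ring_nf
      rw [h2, sub_smul, one_smul]
    have h3 : ‖E ((t • H) *ᵥ ⇑(b j))‖ ≤ 1/2 * ‖E (⇑(b j))‖ := hsmall _
    have hEb : E (⇑(b j)) = b j := rfl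
    rw [h1] at h3
    have h4 : E ((1 - ν j) • ⇑(b j)) = (1 - ν j) • (b j) := by
      rw [hE]; exact WithLp.toLp_smul ..
    rw [h4, norm_smul, Real.norm_eq_abs, hbnorm j, hEb, hbnorm j] at h3
    constructor <;> cases' abs_le.mp (by linarith [h3] : |1 - ν j| ≤ 1/2) with hl hr <;> linarith
  -- B fixes n
  have hBn : B *ᵥ n = n := by
    rw [hB, Matrix.sub_mulVec, Matrix.one_mulVec, Matrix.smul_mulVec, hHn]
    simp
  have hBt : Bᵀ = B := by
    rw [← Matrix.conjTranspose_eq_transpose_of_trivial]; exact hBh.eq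
  -- some eigenvalue is 1
  have hex : ∃ i, ν i = 1 := by
    by_contra h
    push_neg at h
    have hdot : ∀ i, ⇑(b i) ⬝ᵥ n = 0 := by
      intro i
      have h1 : ⇑(b i) ⬝ᵥ (B *ᵥ n) = ⇑(b i) ⬝ᵥ n := by rw [hBn]
      have h2 : ⇑(b i) ⬝ᵥ (B *ᵥ n) = ν i * (⇑(b i) ⬝ᵥ n) := by
        rw [Matrix.dotProduct_mulVec, ← hBt, Matrix.vecMul_transpose, heig i,
          smul_dotProduct]
        simp
      have h3 : (ν i - 1) * (⇑(b i) ⬝ᵥ n) = 0 := by linarith [h1, h2]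
      rcases mul_eq_zero.mp h3 with h4 | h4
      · exact absurd (by linarith : ν i = 1) (h i)
      · exact h4
    have hrepr : hBh.eigenvectorBasis.repr n = 0 := by
      ext i
      rw [OrthonormalBasis.repr_apply_apply]
      have := hdot i
      simpa [PiLp.inner_apply, RCLike.inner_apply, dotProduct, mul_comm] using this
    have hn0 : n = 0 := by
      have := hBh.eigenvectorBasis.repr.map_eq_zero_iff.mp hrepr
      exact this
    rw [hn0, norm_zero] at hn
    norm_num at hn
  -- determinant bounds
  have hdet3 : μ = ν 0 * ν 1 * ν 2 := by
    rw [hμ, hBh.det_eq_prod_eigenvalues, Fin.prod_univ_three]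
    norm_num
    rfl
  obtain ⟨i, hi⟩ := hex
  have key : ν 0 = 1 ∨ ν 1 = 1 ∨ ν 2 = 1 := by
    fin_cases i
    exacts [Or.inl hi, Or.inr (Or.inl hi), Or.inr (Or.inr hi)]
  have hμbound : 1/4 ≤ μ ∧ μ ≤ 9/4 := by
    obtain ⟨h01, h02⟩ := hνbound 0
    obtain ⟨h11, h12⟩ := hνbound 1
    obtain ⟨h21, h22⟩ := hνbound 2
    rcases key with hk | hk | hk <;> rw [hdet3, hk] <;> constructor <;> nlinarith
  -- B is a unit
  have hdetu : IsUnit B.det := isUnit_iff_ne_zero.mpr (by rw [← hμ]; linarith [hμbound.1])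
  have hUnit : IsUnit B := (Matrix.isUnit_iff_isUnit_det B).mpr hdetu
  refine ⟨hUnit, fun v => ?_⟩
  -- quadratic form
  set w : Fin 3 → ℝ := B⁻¹ *ᵥ v with hw
  have hvw : B *ᵥ w = v := by
    rw [hw, Matrix.mulVec_mulVec, Matrix.mul_nonsing_inv B hdetu, Matrix.one_mulVec]
  have hBinvt : B⁻¹ᵀ = B⁻¹ := by rw [Matrix.transpose_nonsing_inv, hBt]
  have hform : (μ • B⁻¹ ^ 2) *ᵥ v ⬝ᵥ v = μ * (w ⬝ᵥ w) := by
    rw [Matrix.smul_mulVec, smul_dotProduct, pow_two, ← Matrix.mulVec_mulVec]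
    congr 1
    rw [dotProduct_comm, Matrix.dotProduct_mulVec, ← hBinvt, Matrix.vecMul_transpose,
      hBinvt]
  -- norm comparisons
  have hwle : ‖E v‖ ≤ 3/2 * ‖E w‖ := by
    have h1 : E v = E w - E ((t • H) *ᵥ w) := by
      rw [← hvw, hB, Matrix.sub_mulVec, Matrix.one_mulVec, hE]; exact WithLp.toLp_sub ..
    rw [h1]
    have := hsmall w
    have h2 := norm_sub_le (E w) (E ((t • H) *ᵥ w))
    linarith
  have hwge : 1/2 * ‖E w‖ ≤ ‖E v‖ := by
    have h1 : E v = E w - E ((t • H) *ᵥ w) := by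
      rw [← hvw, hB, Matrix.sub_mulVec, Matrix.one_mulVec, hE]; exact WithLp.toLp_sub ..
    rw [h1]
    have := hsmall w
    have h2 := norm_sub_norm_le (E w) (E ((t • H) *ᵥ w))
    linarith
  have hvv : v ⬝ᵥ v = ‖E v‖ ^ 2 := dot_eq_normsq v
  have hww : w ⬝ᵥ w = ‖E w‖ ^ 2 := dot_eq_normsq w
  have hnv : (0:ℝ) ≤ ‖E v‖ := norm_nonneg _
  have hnw : (0:ℝ) ≤ ‖E w‖ := norm_nonneg _
  rw [hform, hvv, hww]
  constructor
  · nlinarith [hμbound.1, hwle, hnv, hnw]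
  · nlinarith [hμbound.2, hwge, hnv, hnw]
end

section
/- Let N ≥ 1. There exists a constant C > 0 such that for all symmetric real N×N matrices A and B whose eigenvalues all lie in the interval [1/2, 3/2], one has ‖det(A)·A⁻² − det(B)·B⁻²‖₂ ≤ C·‖A − B‖₂ and |det(A) − det(B)| ≤ C·‖A − B‖₂, where A⁻² = (A⁻¹)². -/
set_option maxHeartbeats 2000000

section Aux

open Matrix
open scoped Matrix.Norms.L2Operator

private lemma coord_abs_le' {n : Type*} [Fintype n] (y : EuclideanSpace ℝ n) (i : n) :
    |y i| ≤ ‖y‖ := by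
  rw [EuclideanSpace.norm_eq, ← Real.sqrt_sq_eq_abs]
  apply Real.sqrt_le_sqrt
  have : |y i|^2 ≤ ∑ j, ‖y j‖^2 := by
    have := Finset.single_le_sum (f := fun j => ‖y j‖^2) (fun j _ => by positivity)
      (Finset.mem_univ i)
    simpa [Real.norm_eq_abs, sq_abs] using this
  simpa [sq_abs] using this

private lemma diag_norm_le' {n : Type*} [Fintype n] [DecidableEq n] (v : n → ℝ) {r : ℝ}
    (hr : 0 ≤ r) (h : ∀ i, |v i| ≤ r) : ‖(Matrix.diagonal v : Matrix n n ℝ)‖ ≤ r := by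
  rw [Matrix.l2_opNorm_def]
  apply ContinuousLinearMap.opNorm_le_bound _ hr
  intro x
  set y : EuclideanSpace ℝ n :=
    (LinearMap.toContinuousLinearMap ((Matrix.toEuclideanLin (Matrix.diagonal v)))) x with hy
  have hyi : ∀ i, y i = v i * x i := by
    intro i
    simp [hy, Matrix.toEuclideanLin_apply, Matrix.mulVec_diagonal]
  have hxy : ((Matrix.toEuclideanLin ≪≫ₗ LinearMap.toContinuousLinearMap) (Matrix.diagonal v)) x = y := rfl
  rw [hxy, EuclideanSpace.norm_eq, EuclideanSpace.norm_eq]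
  rw [← Real.sqrt_sq hr, ← Real.sqrt_mul (by positivity)]
  apply Real.sqrt_le_sqrt
  rw [Finset.mul_sum]
  apply Finset.sum_le_sum
  intro i _
  rw [hyi i]
  simp only [Real.norm_eq_abs, abs_mul]
  rw [mul_pow, sq_abs (x i)]
  have h1 : |v i|^2 ≤ r^2 := by nlinarith [abs_nonneg (v i), h i]
  nlinarith [sq_nonneg (x i)]

/-- Row `i` of `X`, as an element of Euclidean space. -/
private noncomputable def rowE' {N : ℕ} (X : Matrix (Fin N) (Fin N) ℝ) (i : Fin N) :
    EuclideanSpace ℝ (Fin N) := (EuclideanSpace.equiv (Fin N) ℝ).symm (X i)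

private lemma rowE_sub' {N : ℕ} (X Y : Matrix (Fin N) (Fin N) ℝ) :
    rowE' (X - Y) = rowE' X - rowE' Y := by
  funext i
  simp [rowE']
  rfl

private lemma rowE_norm_le' {N : ℕ} (X : Matrix (Fin N) (Fin N) ℝ) (i : Fin N) :
    ‖rowE' X i‖ ≤ ‖X‖ := by
  have hrow : X i = X.conjTranspose *ᵥ (EuclideanSpace.single i (1:ℝ)) := by
    funext j
    simp [Matrix.mulVec, dotProduct, Matrix.conjTranspose_apply,
      EuclideanSpace.single_apply]
  have := Matrix.l2_opNorm_mulVec X.conjTranspose (EuclideanSpace.single i (1:ℝ))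
  rw [Matrix.l2_opNorm_conjTranspose, EuclideanSpace.norm_single] at this
  simpa [rowE', hrow] using this

private lemma rowE_pi_norm_le' {N : ℕ} (X : Matrix (Fin N) (Fin N) ℝ) {r : ℝ} (hr : 0 ≤ r)
    (h : ‖X‖ ≤ r) : ‖rowE' X‖ ≤ r := by
  rw [pi_norm_le_iff_of_nonneg hr]
  exact fun i => (rowE_norm_le' X i).trans h

/-- The determinant as a continuous multilinear map on the rows (as Euclidean vectors). -/
private noncomputable def detCMM' (N : ℕ) :
    ContinuousMultilinearMap ℝ (fun _ : Fin N => EuclideanSpace ℝ (Fin N)) ℝ :=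
  MultilinearMap.mkContinuous
    ((Matrix.detRowAlternating (R := ℝ) (n := Fin N)).toMultilinearMap.compLinearMap
      (fun _ => ((EuclideanSpace.equiv (Fin N) ℝ).toLinearEquiv.toLinearMap)))
    (Nat.factorial N)
    (by
      intro m
      have key : (Matrix.detRowAlternating (R := ℝ) (n := Fin N))
          (fun i => (EuclideanSpace.equiv (Fin N) ℝ) (m i))
          = Matrix.det (Matrix.of fun i j => m i j) := rfl
      simp only [MultilinearMap.compLinearMap_apply, AlternatingMap.coe_multilinearMap,
        LinearEquiv.coe_coe, ContinuousLinearEquiv.coe_toLinearEquiv]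
      rw [key, Matrix.det_apply]
      calc ‖∑ σ : Equiv.Perm (Fin N), Equiv.Perm.sign σ • ∏ i, (Matrix.of fun i j => m i j) (σ i) i‖
          ≤ ∑ σ : Equiv.Perm (Fin N), ‖Equiv.Perm.sign σ • ∏ i, (Matrix.of fun i j => m i j) (σ i) i‖ :=
            norm_sum_le _ _
        _ ≤ ∑ _σ : Equiv.Perm (Fin N), ∏ i, ‖m i‖ := by
            apply Finset.sum_le_sum
            intro σ _
            have hs : ‖Equiv.Perm.sign σ • ∏ i, (Matrix.of fun i j => m i j) (σ i) i‖
                = ‖∏ i, (Matrix.of fun i j => m i j) (σ i) i‖ := by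
              rcases Int.units_eq_one_or (Equiv.Perm.sign σ) with h | h <;> simp [h]
            rw [hs]
            have h2 : ‖∏ i, (Matrix.of fun i j => m i j) (σ i) i‖ ≤ ∏ i, ‖m (σ i)‖ := by
              rw [Real.norm_eq_abs, Finset.abs_prod]
              apply Finset.prod_le_prod (fun i _ => abs_nonneg _)
              intro i _
              exact coord_abs_le' (m (σ i)) i
            refine h2.trans (le_of_eq ?_)
            exact Equiv.prod_comp σ (fun i => ‖m i‖)
        _ = (Nat.factorial N : ℝ) * ∏ i, ‖m i‖ := by
            rw [Finset.sum_const, Finset.card_univ, Fintype.card_perm, Fintype.card_fin,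
              nsmul_eq_mul])

private lemma detCMM_apply' {N : ℕ} (X : Matrix (Fin N) (Fin N) ℝ) :
    detCMM' N (rowE' X) = X.det := rfl

section EV
set_option linter.unusedSectionVars false

variable {N : ℕ} (hN : 1 ≤ N) {A : Matrix (Fin N) (Fin N) ℝ} (hA : A.IsHermitian)
  (hev : ∀ i, hA.eigenvalues i ∈ Set.Icc (1 / 2 : ℝ) (3 / 2))

include hN hA hev

private lemma norm_le_of_ev' : ‖A‖ ≤ 3/2 := by
  have : Nontrivial (Matrix (Fin N) (Fin N) ℝ) := by
    refine ⟨0, 1, fun h => ?_⟩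
    have := congrFun (congrFun h ⟨0, hN⟩) ⟨0, hN⟩
    simp [Matrix.one_apply_eq] at this
  have hcoe : (RCLike.ofReal ∘ hA.eigenvalues : Fin N → ℝ) = hA.eigenvalues := rfl
  have hspec := hA.spectral_theorem
  rw [hcoe, Unitary.conjStarAlgAut_apply] at hspec
  calc ‖A‖ = ‖((hA.eigenvectorUnitary : Matrix (Fin N) (Fin N) ℝ) * diagonal hA.eigenvalues)
        * (star (hA.eigenvectorUnitary : Matrix (Fin N) (Fin N) ℝ))‖ := by
        rw [← hspec]
    _ = ‖(hA.eigenvectorUnitary : Matrix (Fin N) (Fin N) ℝ) * diagonal hA.eigenvalues‖ := by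
        exact CStarRing.norm_mul_coe_unitary _ (star hA.eigenvectorUnitary)
    _ = ‖(diagonal hA.eigenvalues : Matrix (Fin N) (Fin N) ℝ)‖ :=
        CStarRing.norm_coe_unitary_mul hA.eigenvectorUnitary _
    _ ≤ 3/2 := diag_norm_le' _ (by norm_num) (fun i => by
        rw [abs_le]; constructor <;> [linarith [(hev i).1]; exact (hev i).2])

private lemma det_pos_of_ev' : 0 < A.det := by
  have : A.det = ∏ i, hA.eigenvalues i := by
    rw [hA.det_eq_prod_eigenvalues]; norm_num
  rw [this]
  exact Finset.prod_pos (fun i _ => lt_of_lt_of_le (by norm_num) (hev i).1)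

private lemma abs_det_le_of_ev' : |A.det| ≤ (3/2)^N := by
  have : A.det = ∏ i, hA.eigenvalues i := by
    rw [hA.det_eq_prod_eigenvalues]; norm_num
  rw [this, Finset.abs_prod]
  calc ∏ i, |hA.eigenvalues i| ≤ ∏ _i : Fin N, (3/2 : ℝ) := by
        apply Finset.prod_le_prod (fun i _ => abs_nonneg _)
        intro i _
        rw [abs_le]; constructor <;> [linarith [(hev i).1]; exact (hev i).2]
    _ = (3/2)^N := by rw [Finset.prod_const, Finset.card_univ, Fintype.card_fin]

private lemma inv_eq_of_ev' : A⁻¹ = (hA.eigenvectorUnitary : Matrix (Fin N) (Fin N) ℝ)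
    * diagonal (fun i => (hA.eigenvalues i)⁻¹)
    * (star (hA.eigenvectorUnitary : Matrix (Fin N) (Fin N) ℝ)) := by
  apply Matrix.inv_eq_right_inv
  have hcoe : (RCLike.ofReal ∘ hA.eigenvalues : Fin N → ℝ) = hA.eigenvalues := rfl
  nth_rewrite 1 [hA.spectral_theorem]
  simp only [hcoe, Unitary.conjStarAlgAut_apply]
  have hUU : (star (hA.eigenvectorUnitary : Matrix (Fin N) (Fin N) ℝ))
      * (hA.eigenvectorUnitary : Matrix (Fin N) (Fin N) ℝ) = 1 :=
    Unitary.coe_star_mul_self hA.eigenvectorUnitary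
  have hUU2 : (hA.eigenvectorUnitary : Matrix (Fin N) (Fin N) ℝ)
      * (star (hA.eigenvectorUnitary : Matrix (Fin N) (Fin N) ℝ)) = 1 :=
    Unitary.coe_mul_star_self hA.eigenvectorUnitary
  have hdd : (diagonal hA.eigenvalues : Matrix (Fin N) (Fin N) ℝ)
      * diagonal (fun i => (hA.eigenvalues i)⁻¹) = 1 := by
    rw [Matrix.diagonal_mul_diagonal]
    have hfun : (fun i => hA.eigenvalues i * (hA.eigenvalues i)⁻¹) = fun _ : Fin N => (1:ℝ) :=
      funext fun i => mul_inv_cancel₀ (by linarith [(hev i).1])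
    rw [hfun, Matrix.diagonal_one]
  simp only [mul_assoc]
  rw [← mul_assoc (star (hA.eigenvectorUnitary : Matrix (Fin N) (Fin N) ℝ))
    (hA.eigenvectorUnitary : Matrix (Fin N) (Fin N) ℝ), hUU, one_mul]
  rw [← mul_assoc (diagonal hA.eigenvalues), hdd, one_mul, hUU2]

private lemma inv_norm_le_of_ev' : ‖A⁻¹‖ ≤ 2 := by
  have : Nontrivial (Matrix (Fin N) (Fin N) ℝ) := by
    refine ⟨0, 1, fun h => ?_⟩
    have := congrFun (congrFun h ⟨0, hN⟩) ⟨0, hN⟩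
    simp [Matrix.one_apply_eq] at this
  rw [inv_eq_of_ev' hN hA hev]
  calc ‖(hA.eigenvectorUnitary : Matrix (Fin N) (Fin N) ℝ)
        * diagonal (fun i => (hA.eigenvalues i)⁻¹)
        * (star (hA.eigenvectorUnitary : Matrix (Fin N) (Fin N) ℝ))‖
      = ‖(hA.eigenvectorUnitary : Matrix (Fin N) (Fin N) ℝ)
        * diagonal (fun i => (hA.eigenvalues i)⁻¹)‖ :=
        CStarRing.norm_mul_coe_unitary _ (star hA.eigenvectorUnitary)
    _ = ‖(diagonal (fun i => (hA.eigenvalues i)⁻¹) : Matrix (Fin N) (Fin N) ℝ)‖ :=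
        CStarRing.norm_coe_unitary_mul hA.eigenvectorUnitary _
    _ ≤ 2 := by
        apply diag_norm_le' _ (by norm_num)
        intro i
        have h1 : (1:ℝ)/2 ≤ hA.eigenvalues i := (hev i).1
        have h2 : 0 < (hA.eigenvalues i)⁻¹ := by positivity
        rw [abs_of_pos h2]
        rw [show (2:ℝ) = ((1:ℝ)/2)⁻¹ by norm_num]
        exact inv_anti₀ (by norm_num) h1

end EV

end Aux

open scoped Matrix.Norms.L2Operator in
/-- Consistency estimate from the proof of Theorem 5.3: the map `A ↦ det(A)·A⁻²` and
the determinant are Lipschitz (in spectral norm) on symmetric matrices whose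
eigenvalues all lie in `[1/2, 3/2]`. -/
theorem stmt15 {N : ℕ} (hN : 1 ≤ N) :
    ∃ C : ℝ, 0 < C ∧
      ∀ (A B : Matrix (Fin N) (Fin N) ℝ) (hA : A.IsHermitian) (hB : B.IsHermitian),
        (∀ i, hA.eigenvalues i ∈ Set.Icc (1 / 2 : ℝ) (3 / 2)) →
        (∀ i, hB.eigenvalues i ∈ Set.Icc (1 / 2 : ℝ) (3 / 2)) →
        spectralNorm2 (A.det • A⁻¹ ^ 2 - B.det • B⁻¹ ^ 2) ≤ C * spectralNorm2 (A - B) ∧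
          |A.det - B.det| ≤ C * spectralNorm2 (A - B) := by
  classical
  set Cd : ℝ := ‖detCMM' N‖ * N * (3/2)^(N-1) with hCddef
  have hCd : 0 ≤ Cd := by positivity
  refine ⟨Cd * 4 + (3/2)^N * 48 + Cd + 1, by positivity, ?_⟩
  intro A B hA hB hevA hevB
  have hsn : ∀ X : Matrix (Fin N) (Fin N) ℝ, spectralNorm2 X = ‖X‖ := fun _ => rfl
  set d : ℝ := ‖A - B‖ with hddef
  have hd : 0 ≤ d := norm_nonneg _
  -- basic bounds
  have hnA : ‖A‖ ≤ 3/2 := norm_le_of_ev' hN hA hevA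
  have hnB : ‖B‖ ≤ 3/2 := norm_le_of_ev' hN hB hevB
  have hiA : ‖A⁻¹‖ ≤ 2 := inv_norm_le_of_ev' hN hA hevA
  have hiB : ‖B⁻¹‖ ≤ 2 := inv_norm_le_of_ev' hN hB hevB
  have hdB : |B.det| ≤ (3/2)^N := abs_det_le_of_ev' hN hB hevB
  have hdApos : 0 < A.det := det_pos_of_ev' hN hA hevA
  have hdBpos : 0 < B.det := det_pos_of_ev' hN hB hevB
  -- determinant Lipschitz bound
  have hdet : |A.det - B.det| ≤ Cd * d := by
    have h0 := (detCMM' N).norm_image_sub_le (rowE' A) (rowE' B)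
    rw [detCMM_apply', detCMM_apply', Real.norm_eq_abs] at h0
    have hmax : max ‖rowE' A‖ ‖rowE' B‖ ≤ 3/2 :=
      max_le (rowE_pi_norm_le' A (by norm_num) hnA) (rowE_pi_norm_le' B (by norm_num) hnB)
    have hsub : ‖rowE' A - rowE' B‖ ≤ d := by
      rw [← rowE_sub']
      exact rowE_pi_norm_le' _ hd le_rfl
    have hcard : (Fintype.card (Fin N) : ℝ) = (N : ℝ) := by simp
    refine h0.trans ?_
    rw [hCddef]
    have hpow : max ‖rowE' A‖ ‖rowE' B‖ ^ (N - 1) ≤ (3/2:ℝ)^(N-1) :=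
      pow_le_pow_left₀ (le_max_of_le_left (norm_nonneg _)) hmax _
    calc ‖detCMM' N‖ * (Fintype.card (Fin N)) * max ‖rowE' A‖ ‖rowE' B‖ ^ (Fintype.card (Fin N) - 1)
          * ‖rowE' A - rowE' B‖
        ≤ ‖detCMM' N‖ * (N : ℝ) * (3/2)^(N-1) * d := by
          rw [Fintype.card_fin]
          apply mul_le_mul _ hsub (norm_nonneg _) (by positivity)
          exact mul_le_mul_of_nonneg_left hpow (by positivity)
      _ = ‖detCMM' N‖ * N * (3/2)^(N-1) * d := by norm_num
  -- invertibility
  have hAu : IsUnit A.det := isUnit_iff_ne_zero.mpr hdApos.ne'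
  have hBu : IsUnit B.det := isUnit_iff_ne_zero.mpr hdBpos.ne'
  have hinvAA : A⁻¹ * A = 1 := Matrix.nonsing_inv_mul A hAu
  have hBBinv : B * B⁻¹ = 1 := Matrix.mul_nonsing_inv B hBu
  -- bound on the inverse squares
  have hA2 : ‖A⁻¹^2‖ ≤ 4 := by
    rw [sq]
    calc ‖A⁻¹ * A⁻¹‖ ≤ ‖A⁻¹‖ * ‖A⁻¹‖ := norm_mul_le _ _
      _ ≤ 2 * 2 := mul_le_mul hiA hiA (norm_nonneg _) (by norm_num)
      _ = 4 := by norm_num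
  have hB2 : ‖B⁻¹^2‖ ≤ 4 := by
    rw [sq]
    calc ‖B⁻¹ * B⁻¹‖ ≤ ‖B⁻¹‖ * ‖B⁻¹‖ := norm_mul_le _ _
      _ ≤ 2 * 2 := mul_le_mul hiB hiB (norm_nonneg _) (by norm_num)
      _ = 4 := by norm_num
  have hdiff : ‖A⁻¹^2 - B⁻¹^2‖ ≤ 48 * d := by
    have h1 : A⁻¹^2 * A^2 = 1 := by
      rw [sq, sq, mul_assoc, ← mul_assoc A⁻¹ A A, hinvAA, one_mul, hinvAA]
    have h2 : B^2 * B⁻¹^2 = 1 := by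
      rw [sq, sq, mul_assoc, ← mul_assoc B B⁻¹ B⁻¹, hBBinv, one_mul, hBBinv]
    have h3 : B * (B - A) + (B - A) * A = B^2 - A^2 := by noncomm_ring
    have hid : A⁻¹^2 - B⁻¹^2 = A⁻¹^2 * (B * (B - A) + (B - A) * A) * B⁻¹^2 := by
      rw [h3, mul_sub, sub_mul, mul_assoc (A⁻¹^2) (B^2) (B⁻¹^2), h2, mul_one, h1, one_mul]
    rw [hid]
    have hBA : ‖B - A‖ = d := by rw [hddef, norm_sub_rev]
    have hmid : ‖B * (B - A) + (B - A) * A‖ ≤ 3 * d := by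
      calc ‖B * (B - A) + (B - A) * A‖ ≤ ‖B * (B - A)‖ + ‖(B - A) * A‖ := norm_add_le _ _
        _ ≤ ‖B‖ * ‖B - A‖ + ‖B - A‖ * ‖A‖ := add_le_add (norm_mul_le _ _) (norm_mul_le _ _)
        _ ≤ (3/2) * d + d * (3/2) := by
            apply add_le_add
            · exact mul_le_mul hnB (le_of_eq hBA) (norm_nonneg _) (by norm_num)
            · rw [hBA]
              exact mul_le_mul_of_nonneg_left hnA hd
        _ = 3 * d := by ring
    calc ‖A⁻¹^2 * (B * (B - A) + (B - A) * A) * B⁻¹^2‖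
        ≤ ‖A⁻¹^2 * (B * (B - A) + (B - A) * A)‖ * ‖B⁻¹^2‖ := norm_mul_le _ _
      _ ≤ ‖A⁻¹^2‖ * ‖B * (B - A) + (B - A) * A‖ * ‖B⁻¹^2‖ :=
          mul_le_mul_of_nonneg_right (norm_mul_le _ _) (norm_nonneg _)
      _ ≤ 4 * (3 * d) * 4 := by
          apply mul_le_mul _ hB2 (norm_nonneg _) (by positivity)
          exact mul_le_mul hA2 hmid (norm_nonneg _) (by norm_num)
      _ = 48 * d := by ring
  constructor
  · rw [hsn, hsn, ← hddef]
    have hsplit : A.det • A⁻¹^2 - B.det • B⁻¹^2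
        = (A.det - B.det) • A⁻¹^2 + B.det • (A⁻¹^2 - B⁻¹^2) := by
      rw [sub_smul, smul_sub]
      abel
    rw [hsplit]
    calc ‖(A.det - B.det) • A⁻¹^2 + B.det • (A⁻¹^2 - B⁻¹^2)‖
        ≤ ‖(A.det - B.det) • A⁻¹^2‖ + ‖B.det • (A⁻¹^2 - B⁻¹^2)‖ := norm_add_le _ _
      _ = |A.det - B.det| * ‖A⁻¹^2‖ + |B.det| * ‖A⁻¹^2 - B⁻¹^2‖ := by
          rw [norm_smul, norm_smul, Real.norm_eq_abs, Real.norm_eq_abs]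
      _ ≤ (Cd * d) * 4 + (3/2)^N * (48 * d) := by
          apply add_le_add
          · exact mul_le_mul hdet hA2 (norm_nonneg _) (by positivity)
          · exact mul_le_mul hdB hdiff (norm_nonneg _) (by positivity)
      _ ≤ (Cd * 4 + (3/2)^N * 48 + Cd + 1) * d := by nlinarith [mul_nonneg hCd hd, hd]
  · rw [hsn, ← hddef]
    refine hdet.trans ?_
    have hpos : (0:ℝ) ≤ (3/2)^N := by positivity
    nlinarith [mul_nonneg hCd hd, mul_nonneg hpos hd]
end
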